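/- Let X be a Banach space, n ∈ ℕ, and let T: ℓ∞^n → X be any bounded linear operator, where ℓ∞^n is the n-dimensional sequence space with the sup-norm and standard unit vectors e_1, …, e_n. Then T is nuclear and ν(T) = ∑_{i=1}^n ‖T e_i‖_X. -/

import Mathlib

open scoped ENNReal

/-- A nuclear representation of a bounded linear operator `T : X → Y`. -/
def IsNuclearRep {X Y : Type*} [NormedAddCommGroup X] [NormedSpace ℂ X]
    [NormedAddCommGroup Y] [NormedSpace ℂ Y] (T : X →L[ℂ] Y)
    (a : ℕ → (X →L[ℂ] ℂ)) (y : ℕ → Y) : Prop :=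
  Summable (fun k => ‖a k‖ * ‖y k‖) ∧ ∀ x : X, HasSum (fun k => a k x • y k) (T x)

/-- `T` is nuclear if it admits a nuclear representation. -/
def IsNuclear {X Y : Type*} [NormedAddCommGroup X] [NormedSpace ℂ X]
    [NormedAddCommGroup Y] [NormedSpace ℂ Y] (T : X →L[ℂ] Y) : Prop :=
  ∃ a y, IsNuclearRep T a y

/-- The nuclear norm of `T`. -/
noncomputable def nuclearNorm {X Y : Type*} [NormedAddCommGroup X] [NormedSpace ℂ X]
    [NormedAddCommGroup Y] [NormedSpace ℂ Y] (T : X →L[ℂ] Y) : ℝ :=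
  sInf {c : ℝ | ∃ a y, IsNuclearRep T a y ∧ c = ∑' k, ‖a k‖ * ‖y k‖}


noncomputable section

variable {n : ℕ}

abbrev E (n : ℕ) := PiLp ∞ (fun _ : Fin n => ℂ)

/-- standard unit vector -/
noncomputable def ee (i : Fin n) : E n := (WithLp.equiv ∞ (∀ _ : Fin n, ℂ)).symm (Pi.single i 1)

lemma ee_norm (i : Fin n) : ‖ee i‖ = 1 := by
  rw [ee, WithLp.equiv_symm_apply, PiLp.norm_toLp]
  simp [Pi.norm_single]

lemma decomp (x : E n) : x = ∑ i, x i • ee i := by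
  apply (PiLp.continuousLinearEquiv ∞ ℂ (fun _ : Fin n => ℂ)).injective
  rw [map_sum]
  have h : ∀ i, (PiLp.continuousLinearEquiv ∞ ℂ (fun _ : Fin n => ℂ)) (x i • ee i)
      = Pi.single i (x i) := by
    intro i
    rw [map_smul]
    have : (PiLp.continuousLinearEquiv ∞ ℂ (fun _ : Fin n => ℂ)) (ee i) = Pi.single i 1 := rfl
    rw [this, ← Pi.single_smul, smul_eq_mul, mul_one]
  simp_rw [h]
  rw [Finset.univ_sum_single]
  rfl

/-- coordinate projection -/
noncomputable def pr (i : Fin n) : E n →L[ℂ] ℂ :=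
  (ContinuousLinearMap.proj i).comp
    (PiLp.continuousLinearEquiv ∞ ℂ (fun _ : Fin n => ℂ) : E n →L[ℂ] (∀ _ : Fin n, ℂ))

lemma pr_apply (i : Fin n) (x : E n) : pr i x = x i := rfl

lemma pr_norm_le (i : Fin n) : ‖pr i‖ ≤ 1 := by
  refine ContinuousLinearMap.opNorm_le_bound _ zero_le_one fun x => ?_
  rw [pr_apply, one_mul]
  calc ‖x i‖ ≤ ‖WithLp.equiv ∞ (∀ _ : Fin n, ℂ) x‖ := norm_le_pi_norm _ i
  _ = ‖x‖ := PiLp.norm_ofLp x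

end

noncomputable section
variable {n : ℕ}

lemma coordSum (f : E n →L[ℂ] ℂ) : ∑ i, ‖f (ee i)‖ ≤ ‖f‖ := by
  set c : Fin n → ℂ := fun i => (starRingEnd ℂ) (f (ee i)) / ‖f (ee i)‖ with hc
  set z : E n := (WithLp.equiv ∞ (∀ _ : Fin n, ℂ)).symm c with hz
  have hzi : ∀ i, z i = c i := fun _ => rfl
  have hznorm : ‖z‖ ≤ 1 := by
    rw [hz, WithLp.equiv_symm_apply, PiLp.norm_toLp]
    refine (pi_norm_le_iff_of_nonneg zero_le_one).2 fun i => ?_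
    rw [hc]
    simp only [norm_div, RCLike.norm_conj, Complex.norm_real, norm_norm]
    rcases eq_or_ne (f (ee i)) 0 with h | h
    · simp [h]
    · rw [div_self (norm_ne_zero_iff.2 h)]
  have hterm : ∀ i : Fin n, c i * f (ee i) = (‖f (ee i)‖ : ℂ) := by
    intro i
    rcases eq_or_ne (f (ee i)) 0 with h | h
    · simp [hc, h]
    · rw [hc]
      simp only
      rw [div_mul_eq_mul_div, Complex.conj_mul']
      rw [sq, mul_div_assoc, div_self (by exact_mod_cast norm_ne_zero_iff.2 h), mul_one]
  have hfz : f z = ((∑ i, ‖f (ee i)‖ : ℝ) : ℂ) := by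
    conv_lhs => rw [decomp z]
    rw [map_sum]
    push_cast
    refine Finset.sum_congr rfl fun i _ => ?_
    rw [map_smul, smul_eq_mul, hzi, hterm]
  calc ∑ i, ‖f (ee i)‖ = ‖f z‖ := by
        rw [hfz, Complex.norm_real, Real.norm_eq_abs,
          abs_of_nonneg (Finset.sum_nonneg fun i _ => norm_nonneg _)]
    _ ≤ ‖f‖ * ‖z‖ := f.le_opNorm z
    _ ≤ ‖f‖ := by
        calc ‖f‖ * ‖z‖ ≤ ‖f‖ * 1 := by
              exact mul_le_mul_of_nonneg_left hznorm (norm_nonneg _)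
          _ = ‖f‖ := mul_one _

end


section main
variable {n : ℕ} {X : Type*} [NormedAddCommGroup X] [NormedSpace ℂ X]

lemma lower (T : E n →L[ℂ] X) (a : ℕ → (E n →L[ℂ] ℂ)) (y : ℕ → X)
    (h : IsNuclearRep T a y) : ∑ i, ‖T (ee i)‖ ≤ ∑' k, ‖a k‖ * ‖y k‖ := by
  obtain ⟨hs, hT⟩ := h
  have hbI : ∀ (i : Fin n) (k : ℕ), ‖a k (ee i)‖ * ‖y k‖ ≤ ‖a k‖ * ‖y k‖ := by
    intro i k
    refine mul_le_mul_of_nonneg_right ?_ (norm_nonneg _)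
    calc ‖a k (ee i)‖ ≤ ‖a k‖ * ‖ee i‖ := (a k).le_opNorm _
      _ = ‖a k‖ := by rw [ee_norm, mul_one]
  have hsum_i : ∀ i : Fin n, Summable fun k => ‖a k (ee i)‖ * ‖y k‖ := fun i =>
    hs.of_nonneg_of_le (fun k => by positivity) (hbI i)
  have h1 : ∀ i : Fin n, ‖T (ee i)‖ ≤ ∑' k, ‖a k (ee i)‖ * ‖y k‖ := by
    intro i
    rw [← (hT (ee i)).tsum_eq]
    calc ‖∑' k, a k (ee i) • y k‖ ≤ ∑' k, ‖a k (ee i) • y k‖ :=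
          norm_tsum_le_tsum_norm (by simpa [norm_smul] using hsum_i i)
      _ = ∑' k, ‖a k (ee i)‖ * ‖y k‖ := by simp [norm_smul]
  have hpt : ∀ k, ∑ i : Fin n, ‖a k (ee i)‖ * ‖y k‖ ≤ ‖a k‖ * ‖y k‖ := by
    intro k
    rw [← Finset.sum_mul]
    exact mul_le_mul_of_nonneg_right (coordSum (a k)) (norm_nonneg _)
  calc ∑ i, ‖T (ee i)‖ ≤ ∑ i : Fin n, ∑' k, ‖a k (ee i)‖ * ‖y k‖ :=
        Finset.sum_le_sum fun i _ => h1 i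
    _ = ∑' k, ∑ i : Fin n, ‖a k (ee i)‖ * ‖y k‖ :=
        (Summable.tsum_finsetSum (fun i _ => hsum_i i)).symm
    _ ≤ ∑' k, ‖a k‖ * ‖y k‖ := by
        refine Summable.tsum_le_tsum hpt ?_ hs
        exact hs.of_nonneg_of_le
          (fun k => Finset.sum_nonneg fun i _ => by positivity) hpt

theorem stmt1' [CompleteSpace X] (T : E n →L[ℂ] X) :
    IsNuclear T ∧ nuclearNorm T = ∑ i : Fin n, ‖T (ee i)‖ := by
  set A : ℕ → (E n →L[ℂ] ℂ) := fun k => if h : k < n then pr ⟨k, h⟩ else 0 with hA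
  set Y : ℕ → X := fun k => if h : k < n then T (ee ⟨k, h⟩) else 0 with hY
  have hAz : ∀ k ∉ Finset.range n, (fun k => ‖A k‖ * ‖Y k‖) k = 0 := by
    intro k hk
    rw [Finset.mem_range] at hk
    simp [hA, hY, dif_neg hk]
  have hrep : IsNuclearRep T A Y := by
    constructor
    · exact summable_of_ne_finset_zero hAz
    · intro x
      have hz : ∀ k ∉ Finset.range n, (fun k => A k x • Y k) k = 0 := by
        intro k hk
        rw [Finset.mem_range] at hk
        simp [hA, hY, dif_neg hk]
      have := hasSum_sum_of_ne_finset_zero (L := SummationFilter.unconditional ℕ) hz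
      convert this using 1
      rw [← Fin.sum_univ_eq_sum_range (fun k => A k x • Y k) n]
      have : ∀ i : Fin n, A i.val x • Y i.val = (x i) • T (ee i) := by
        intro i
        simp [hA, hY, dif_pos i.isLt, pr_apply]
      simp_rw [this, ← map_smul, ← map_sum, ← decomp]
  have htsum : ∑' k, ‖A k‖ * ‖Y k‖ ≤ ∑ i : Fin n, ‖T (ee i)‖ := by
    rw [tsum_eq_sum hAz, ← Fin.sum_univ_eq_sum_range (fun k => ‖A k‖ * ‖Y k‖) n]
    refine Finset.sum_le_sum fun i _ => ?_
    have : ‖A i.val‖ * ‖Y i.val‖ = ‖pr i‖ * ‖T (ee i)‖ := by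
      simp [hA, hY, dif_pos i.isLt]
    rw [this]
    calc ‖pr i‖ * ‖T (ee i)‖ ≤ 1 * ‖T (ee i)‖ :=
          mul_le_mul_of_nonneg_right (pr_norm_le i) (norm_nonneg _)
      _ = ‖T (ee i)‖ := one_mul _
  refine ⟨⟨A, Y, hrep⟩, ?_⟩
  have hmem : (∑' k, ‖A k‖ * ‖Y k‖) ∈
      {c : ℝ | ∃ a y, IsNuclearRep T a y ∧ c = ∑' k, ‖a k‖ * ‖y k‖} :=
    ⟨A, Y, hrep, rfl⟩
  have hlb : ∀ c ∈ {c : ℝ | ∃ a y, IsNuclearRep T a y ∧ c = ∑' k, ‖a k‖ * ‖y k‖},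
      ∑ i : Fin n, ‖T (ee i)‖ ≤ c := by
    rintro c ⟨a, y, h, rfl⟩
    exact lower T a y h
  refine le_antisymm ?_ (le_csInf ⟨_, hmem⟩ hlb)
  exact le_trans (csInf_le ⟨_, hlb⟩ hmem) htsum

end main

/-- Any bounded linear operator `T : ℓ∞ⁿ → X` into a Banach space `X`
is nuclear, with nuclear norm `ν(T) = ∑_{i=1}^n ‖T e_i‖`, where `e_i` are the
standard unit vectors of `ℓ∞ⁿ`. -/
theorem stmt1 (X : Type*) [NormedAddCommGroup X] [NormedSpace ℂ X] [CompleteSpace X]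
    (n : ℕ) (T : PiLp ∞ (fun _ : Fin n => ℂ) →L[ℂ] X) :
    IsNuclear T ∧
      nuclearNorm T
        = ∑ i : Fin n, ‖T ((WithLp.equiv ∞ (∀ _ : Fin n, ℂ)).symm (Pi.single i 1))‖ := by
  exact stmt1' T
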